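/- Let (X, μ) be a measure space and Ω a finite index set. For each ω ∈ Ω let ψ_ω : X → X be measurable, let g_ω : X → [0,∞) be measurable, and let J_ω : X → (0,∞) be measurable and everywhere strictly positive. Assume the change-of-variables inequality Σ_{ω∈Ω} ∫_X (h∘ψ_ω) · J_ω dμ ≤ ∫_X h dμ holds for every measurable h : X → [0,∞]. Let 1 < t < ∞ and let t' = t/(t−1) be its conjugate exponent. Then for every measurable φ : X → [0,∞], ∫_X (Σ_{ω∈Ω} g_ω · (φ∘ψ_ω))^t dμ ≤ S^{t/t'} · ∫_X φ^t dμ, where S := ess sup_{x∈X} Σ_{ω∈Ω} g_ω(x)^{t'} · J_ω(x)^{1−t'} (the inequality being interpreted in [0,∞], and holding trivially when S = ∞). -/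
import Mathlib


open MeasureTheory

private lemma sum_holder {Ω : Type} [Fintype Ω] (a b : Ω → ENNReal) {p q : ℝ}
    (hpq : Real.HolderConjugate p q) :
    ∑ ω, a ω * b ω ≤ (∑ ω, a ω ^ p) ^ (1 / p) * (∑ ω, b ω ^ q) ^ (1 / q) := by
  letI : MeasurableSpace Ω := ⊤
  have h := ENNReal.lintegral_mul_le_Lp_mul_Lq (Measure.count : Measure Ω) hpq
    (measurable_from_top.aemeasurable (f := a)) (measurable_from_top.aemeasurable (f := b))
  rw [lintegral_count' measurable_from_top, lintegral_count' measurable_from_top,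
    lintegral_count' measurable_from_top, tsum_fintype, tsum_fintype, tsum_fintype] at h
  exact h

/-- Estimate (4.8) in the proof of Lemma 16(3): under the change-of-variables
inequality `Σ_ω ∫ (h∘ψ_ω)·J_ω dμ ≤ ∫ h dμ`, Hölder's inequality yields
`∫ (Σ_ω g_ω·(φ∘ψ_ω))^t dμ ≤ S^{t/t'} ∫ φ^t dμ` with
`S = ess sup Σ_ω g_ω^{t'} J_ω^{1-t'}`. -/
theorem stmt_19 (X : Type*) [MeasurableSpace X] (μ : Measure X)
    (Ω : Type) [Fintype Ω]
    (ψ : Ω → X → X) (hψ : ∀ ω, Measurable (ψ ω))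
    (g : Ω → X → ℝ) (hg : ∀ ω, Measurable (g ω)) (hg0 : ∀ ω x, 0 ≤ g ω x)
    (J : Ω → X → ℝ) (hJ : ∀ ω, Measurable (J ω)) (hJ0 : ∀ ω x, 0 < J ω x)
    (hcov : ∀ h : X → ENNReal, Measurable h →
      (∑ ω, ∫⁻ x, h (ψ ω x) * ENNReal.ofReal (J ω x) ∂μ) ≤ ∫⁻ x, h x ∂μ)
    (t t' : ℝ) (ht : 1 < t) (ht' : t' = t / (t - 1)) :
    ∀ φ : X → ENNReal, Measurable φ →
      (∫⁻ x, (∑ ω, ENNReal.ofReal (g ω x) * φ (ψ ω x)) ^ t ∂μ)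
        ≤ (essSup (fun x => ∑ ω,
              ENNReal.ofReal (g ω x) ^ t' * ENNReal.ofReal (J ω x) ^ (1 - t')) μ) ^ (t / t') *
            ∫⁻ x, (φ x) ^ t ∂μ := by
  intro φ hφ
  have hpq : Real.HolderConjugate t t' :=
    (Real.holderConjugate_iff_eq_conjExponent ht).2 ht'
  set B : X → ENNReal := fun x =>
    ∑ ω, ENNReal.ofReal (g ω x) ^ t' * ENNReal.ofReal (J ω x) ^ (1 - t') with hB
  set A : X → ENNReal := fun x => ∑ ω, φ (ψ ω x) ^ t * ENNReal.ofReal (J ω x) with hA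
  set S := essSup B μ with hS
  -- pointwise Hölder
  have key : ∀ x, (∑ ω, ENNReal.ofReal (g ω x) * φ (ψ ω x)) ^ t ≤ B x ^ (t / t') * A x := by
    intro x
    have hJne : ∀ ω, ENNReal.ofReal (J ω x) ≠ 0 :=
      fun ω => (ENNReal.ofReal_pos.2 (hJ0 ω x)).ne'
    have hJnt : ∀ ω, ENNReal.ofReal (J ω x) ≠ ⊤ := fun ω => ENNReal.ofReal_ne_top
    -- rewrite the sum
    have h1 : ∑ ω, ENNReal.ofReal (g ω x) * φ (ψ ω x)
        = ∑ ω, (ENNReal.ofReal (J ω x) ^ (1 / t) * φ (ψ ω x)) *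
            (ENNReal.ofReal (g ω x) * ENNReal.ofReal (J ω x) ^ (-(1 / t))) := by
      refine Finset.sum_congr rfl fun ω _ => Eq.symm ?_
      have : ENNReal.ofReal (J ω x) ^ (1 / t) * ENNReal.ofReal (J ω x) ^ (-(1 / t)) = 1 := by
        rw [← ENNReal.rpow_add _ _ (hJne ω) (hJnt ω)]
        simp
      calc (ENNReal.ofReal (J ω x) ^ (1 / t) * φ (ψ ω x)) *
            (ENNReal.ofReal (g ω x) * ENNReal.ofReal (J ω x) ^ (-(1 / t)))
          = (ENNReal.ofReal (J ω x) ^ (1 / t) * ENNReal.ofReal (J ω x) ^ (-(1 / t))) *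
              (ENNReal.ofReal (g ω x) * φ (ψ ω x)) := by ring
        _ = ENNReal.ofReal (g ω x) * φ (ψ ω x) := by rw [this, one_mul]
    have h2 := sum_holder (fun ω => ENNReal.ofReal (J ω x) ^ (1 / t) * φ (ψ ω x))
      (fun ω => ENNReal.ofReal (g ω x) * ENNReal.ofReal (J ω x) ^ (-(1 / t))) hpq
    rw [← h1] at h2
    have hAeq : (∑ ω, (ENNReal.ofReal (J ω x) ^ (1 / t) * φ (ψ ω x)) ^ t) = A x := by
      refine Finset.sum_congr rfl fun ω _ => ?_
      rw [ENNReal.mul_rpow_of_nonneg _ _ hpq.nonneg, ← ENNReal.rpow_mul,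
        one_div_mul_cancel hpq.ne_zero, ENNReal.rpow_one, mul_comm]
    have hBeq : (∑ ω, (ENNReal.ofReal (g ω x) * ENNReal.ofReal (J ω x) ^ (-(1 / t))) ^ t')
        = B x := by
      refine Finset.sum_congr rfl fun ω _ => ?_
      rw [ENNReal.mul_rpow_of_nonneg _ _ hpq.symm.nonneg, ← ENNReal.rpow_mul]
      have he : -(1 / t) * t' = 1 - t' := by
        have h : t' / t = t' - 1 := hpq.symm.div_conj_eq_sub_one
        have h2 : -(1 / t) * t' = -(t' / t) := by ring
        rw [h2, h]; ring
      rw [he]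
    rw [hAeq, hBeq] at h2
    calc (∑ ω, ENNReal.ofReal (g ω x) * φ (ψ ω x)) ^ t
        ≤ ((A x) ^ (1 / t) * (B x) ^ (1 / t')) ^ t :=
          ENNReal.rpow_le_rpow h2 hpq.nonneg
      _ = B x ^ (t / t') * A x := by
          rw [ENNReal.mul_rpow_of_nonneg _ _ hpq.nonneg, ← ENNReal.rpow_mul,
            ← ENNReal.rpow_mul, one_div_mul_cancel hpq.ne_zero, ENNReal.rpow_one]
          have he2 : 1 / t' * t = t / t' := by ring
          rw [he2, mul_comm]
  -- measurability of A
  have hAmeas : Measurable A := by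
    apply Finset.measurable_sum
    intro ω _
    exact ((hφ.comp (hψ ω)).pow_const t).mul ((hJ ω).ennreal_ofReal)
  have step1 : (∫⁻ x, (∑ ω, ENNReal.ofReal (g ω x) * φ (ψ ω x)) ^ t ∂μ)
      ≤ ∫⁻ x, B x ^ (t / t') * A x ∂μ := lintegral_mono key
  have step2 : (∫⁻ x, B x ^ (t / t') * A x ∂μ) ≤ ∫⁻ x, S ^ (t / t') * A x ∂μ := by
    refine lintegral_mono_ae ?_
    filter_upwards [ENNReal.ae_le_essSup B] with x hx
    exact mul_le_mul_left (ENNReal.rpow_le_rpow hx (div_nonneg hpq.nonneg hpq.symm.nonneg)) _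
  have step3 : (∫⁻ x, S ^ (t / t') * A x ∂μ) = S ^ (t / t') * ∫⁻ x, A x ∂μ :=
    lintegral_const_mul _ hAmeas
  have step4 : (∫⁻ x, A x ∂μ) ≤ ∫⁻ x, (φ x) ^ t ∂μ := by
    have hmeas : Measurable fun x => (φ x) ^ t := hφ.pow_const t
    have := hcov (fun x => (φ x) ^ t) hmeas
    rw [hA]
    rw [lintegral_finset_sum]
    · exact this
    · intro ω _
      exact ((hφ.comp (hψ ω)).pow_const t).mul ((hJ ω).ennreal_ofReal)
  calc (∫⁻ x, (∑ ω, ENNReal.ofReal (g ω x) * φ (ψ ω x)) ^ t ∂μ)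
      ≤ S ^ (t / t') * ∫⁻ x, A x ∂μ := step1.trans (step2.trans step3.le)
    _ ≤ S ^ (t / t') * ∫⁻ x, (φ x) ^ t ∂μ := mul_le_mul_right step4 _
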